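/- arXiv:1201.3816 — 2 statements merged into one kernel-verified Lean document; each statement's English description precedes it below -/
import Mathlib

section
/- Let $q \in \mathbb{N}$, $\mu > \rho$ where $\rho = q + 1/2$ (real case $d=1$), and $v$ a real $q\times q$ matrix with $v v^*/\mu$ having operator norm less than 1 (i.e. $v \in \sqrt{\mu}\cdot D_q$). Then $0 \le e^{-\langle v,v\rangle} - \det(I - \tfrac{1}{\mu} v v^*)^\mu \le \tfrac{1}{\mu}\,\mathrm{tr}((vv^*)^2)\, e^{-\langle v,v\rangle}$. -/
open MeasureTheory Filter Matrix

lemma weier {q : ℕ} (a : Fin q → ℝ) (h0 : ∀ i, 0 ≤ a i) (h1 : ∀ i, a i ≤ 1) :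
    1 - ∑ i, a i ≤ ∏ i, (1 - a i) := by
  classical
  have key : ∀ s : Finset (Fin q), 1 - ∑ i ∈ s, a i ≤ ∏ i ∈ s, (1 - a i) := by
    intro s
    induction s using Finset.induction with
    | empty => simp
    | @insert x s hx ih =>
      rw [Finset.sum_insert hx, Finset.prod_insert hx]
      have hS : 0 ≤ ∑ i ∈ s, a i := Finset.sum_nonneg fun i _ => h0 i
      have h1x : 0 ≤ 1 - a x := by linarith [h1 x]
      calc 1 - (a x + ∑ i ∈ s, a i) ≤ (1 - a x) * (1 - ∑ i ∈ s, a i) := by nlinarith [h0 x]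
        _ ≤ (1 - a x) * ∏ i ∈ s, (1 - a i) := mul_le_mul_of_nonneg_left ih h1x
  exact key Finset.univ

lemma scalar_up {μ x : ℝ} (hμ : 0 < μ) (hx1 : μ⁻¹ * x ≤ 1) :
    (1 - μ⁻¹ * x) ^ μ ≤ Real.exp (-x) := by
  have h1 : 1 - μ⁻¹ * x ≤ Real.exp (-(μ⁻¹ * x)) := by
    linarith [Real.add_one_le_exp (-(μ⁻¹ * x))]
  calc (1 - μ⁻¹ * x) ^ μ ≤ (Real.exp (-(μ⁻¹ * x))) ^ μ :=
        Real.rpow_le_rpow (by linarith) h1 hμ.le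
    _ = Real.exp (-x) := by
        rw [← Real.exp_mul]; congr 1; field_simp

lemma scalar_low {μ x : ℝ} (hμ : 1 ≤ μ) (hx : 0 ≤ x) (hx1 : μ⁻¹ * x ≤ 1) :
    Real.exp (-x) * (1 - μ⁻¹ * x ^ 2) ≤ (1 - μ⁻¹ * x) ^ μ := by
  have hμ0 : 0 < μ := lt_of_lt_of_le one_pos hμ
  set t : ℝ := μ⁻¹ * x with ht
  have ht0 : 0 ≤ t := mul_nonneg (inv_nonneg.2 hμ0.le) hx
  have hb : 1 - μ * t ^ 2 ≤ (1 - t ^ 2) ^ μ := by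
    have := one_add_mul_self_le_rpow_one_add (s := -t ^ 2) (by nlinarith) hμ
    simpa [sub_eq_add_neg, mul_neg] using this
  have hc : (1 - t ^ 2) ^ μ ≤ ((1 - t) * Real.exp t) ^ μ := by
    apply Real.rpow_le_rpow (by nlinarith) ?_ hμ0.le
    nlinarith [Real.add_one_le_exp t, Real.exp_pos t]
  have hd : ((1 - t) * Real.exp t) ^ μ = (1 - t) ^ μ * Real.exp x := by
    rw [Real.mul_rpow (by linarith) (Real.exp_pos t).le, ← Real.exp_mul]
    congr 2
    field_simp [ht]
    rw [ht]; field_simp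
  have hmt : μ * t ^ 2 = μ⁻¹ * x ^ 2 := by
    field_simp [ht]
    rw [ht, mul_pow, ← mul_assoc, ← mul_pow, mul_inv_cancel₀ hμ0.ne', one_pow, one_mul]
  have h := hb.trans (hc.trans_eq hd)
  rw [hmt] at h
  calc Real.exp (-x) * (1 - μ⁻¹ * x ^ 2)
      ≤ Real.exp (-x) * ((1 - t) ^ μ * Real.exp x) :=
        mul_le_mul_of_nonneg_left h (Real.exp_pos _).le
    _ = (1 - t) ^ μ := by rw [Real.exp_neg]; field_simp

/-- The exponential inequality: for `μ > ρ = q + 1/2` and `v ∈ √μ·D_q` (i.e.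
`I - vv*/μ` positive definite),
`0 ≤ e^{-⟨v,v⟩} - det(I - vv*/μ)^μ ≤ (1/μ) tr((vv*)²) e^{-⟨v,v⟩}`. -/
theorem exp_det_inequality (q : ℕ) (μ : ℝ) (hμ : μ > q + 1 / 2)
    (v : Matrix (Fin q) (Fin q) ℝ)
    (hv : ((1 : Matrix (Fin q) (Fin q) ℝ) - μ⁻¹ • (v * vᵀ)).PosDef) :
    0 ≤ Real.exp (-(vᵀ * v).trace)
        - ((1 : Matrix (Fin q) (Fin q) ℝ) - μ⁻¹ • (v * vᵀ)).det ^ μ ∧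
      Real.exp (-(vᵀ * v).trace)
          - ((1 : Matrix (Fin q) (Fin q) ℝ) - μ⁻¹ • (v * vᵀ)).det ^ μ
        ≤ μ⁻¹ * ((v * vᵀ) * (v * vᵀ)).trace * Real.exp (-(vᵀ * v).trace) := by
  have hμ0 : 0 < μ := by
    have : (0:ℝ) ≤ q := Nat.cast_nonneg q
    linarith
  set A := v * vᵀ with hAdef
  have hA : A.IsHermitian := by
    have h := isHermitian_mul_conjTranspose_self v
    have hsym : vᴴ = vᵀ := by ext i j; simp
    rwa [hsym] at h
  have hPSD : A.PosSemidef := by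
    have h := posSemidef_self_mul_conjTranspose v
    have hsym : vᴴ = vᵀ := by ext i j; simp
    rwa [hsym] at h
  set lam := hA.eigenvalues with hlam
  set Um : Matrix (Fin q) (Fin q) ℝ := (hA.eigenvectorUnitary : Matrix (Fin q) (Fin q) ℝ) with hUm
  have hU1 : Um * star Um = 1 := (Matrix.mem_unitaryGroup_iff).mp (hA.eigenvectorUnitary).2
  have hU2 : star Um * Um = 1 := (Matrix.mem_unitaryGroup_iff').mp (hA.eigenvectorUnitary).2
  have hspec : A = Um * Matrix.diagonal lam * star Um := by
    have := hA.spectral_theorem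
    simpa using this
  have hlam0 : ∀ i, 0 ≤ lam i := hPSD.eigenvalues_nonneg
  -- eigenvalues less than μ
  have hlt : ∀ i, lam i < μ := by
    intro i
    set x : Fin q → ℝ := ⇑(hA.eigenvectorBasis i) with hx
    have hx0 : x ≠ 0 := by
      have h := hA.eigenvectorBasis.orthonormal.ne_zero i
      intro hc
      apply h
      ext j
      exact congrFun hc j
    have hxx : x ⬝ᵥ x = 1 := by
      have h := hA.eigenvectorBasis.orthonormal.1 i
      have h2 : ‖hA.eigenvectorBasis i‖ ^ 2 = x ⬝ᵥ x := by
        rw [EuclideanSpace.norm_eq, Real.sq_sqrt (by positivity)]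
        simp [dotProduct, pow_two, hx]
      rw [h, one_pow] at h2
      exact h2.symm
    have hmv : ((1 : Matrix (Fin q) (Fin q) ℝ) - μ⁻¹ • A) *ᵥ x
        = x - (μ⁻¹ * lam i) • x := by
      rw [Matrix.sub_mulVec, Matrix.one_mulVec, Matrix.smul_mulVec,
        hA.mulVec_eigenvectorBasis, smul_smul]
    have hp := hv.dotProduct_mulVec_pos hx0
    rw [hmv] at hp
    have hstar : star x = x := by
      ext j; simp
    rw [hstar, dotProduct_sub, dotProduct_smul, hxx] at hp
    simp only [smul_eq_mul, mul_one] at hp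
    have hinv : μ * μ⁻¹ = 1 := mul_inv_cancel₀ hμ0.ne'
    nlinarith [mul_pos hμ0 hp]
  -- conjugation lemma
  have hconj : ∀ M N : Matrix (Fin q) (Fin q) ℝ,
      (Um * M * star Um) * (Um * N * star Um) = Um * (M * N) * star Um := by
    intro M N
    calc (Um * M * star Um) * (Um * N * star Um)
        = Um * M * (star Um * Um) * N * star Um := by
          simp only [Matrix.mul_assoc]
      _ = Um * (M * N) * star Um := by rw [hU2]; simp only [Matrix.mul_one, Matrix.mul_assoc]
  -- trace of A
  have htrA : A.trace = ∑ i, lam i := by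
    rw [hspec, Matrix.trace_mul_cycle, hU2, Matrix.one_mul, Matrix.trace_diagonal]
  -- trace of A*A
  have htrA2 : (A * A).trace = ∑ i, lam i ^ 2 := by
    conv_lhs => rw [hspec]
    rw [hconj, Matrix.diagonal_mul_diagonal, Matrix.trace_mul_cycle, hU2, Matrix.one_mul,
      Matrix.trace_diagonal]
    simp [pow_two]
  -- determinant
  have hdet : ((1 : Matrix (Fin q) (Fin q) ℝ) - μ⁻¹ • A).det
      = ∏ i, (1 - μ⁻¹ * lam i) := by
    have hB : (1 : Matrix (Fin q) (Fin q) ℝ) - μ⁻¹ • A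
        = Um * Matrix.diagonal (fun i => 1 - μ⁻¹ * lam i) * star Um := by
      have hdiag : Matrix.diagonal (fun i => 1 - μ⁻¹ * lam i)
          = (1 : Matrix (Fin q) (Fin q) ℝ) - μ⁻¹ • Matrix.diagonal lam := by
        ext i j
        rcases eq_or_ne i j with h | h <;>
          simp [Matrix.diagonal_apply, h, Matrix.one_apply, Matrix.sub_apply]
      rw [hdiag, Matrix.mul_sub, Matrix.sub_mul, Matrix.mul_one, hU1,
        Matrix.mul_smul, Matrix.smul_mul, hspec]
    rw [hB, Matrix.det_mul_right_comm, hU1, Matrix.one_mul, Matrix.det_diagonal]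
  -- assembly
  set T := ∑ i, lam i with hT
  set S := ∑ i, lam i ^ 2 with hS
  have hfac0 : ∀ i, μ⁻¹ * lam i ≤ 1 := by
    intro i
    rw [inv_mul_le_iff₀ hμ0, mul_one]
    exact (hlt i).le
  have hfacnn : ∀ i, 0 ≤ 1 - μ⁻¹ * lam i := fun i => by linarith [hfac0 i]
  have htr1 : (vᵀ * v).trace = T := by
    rw [Matrix.trace_mul_comm, ← hAdef, htrA]
  have hrpow : ((1 : Matrix (Fin q) (Fin q) ℝ) - μ⁻¹ • A).det ^ μ
      = ∏ i, (1 - μ⁻¹ * lam i) ^ μ := by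
    rw [hdet, ← Real.finset_prod_rpow _ _ (fun i _ => hfacnn i) μ]
  have hexpT : Real.exp (-T) = ∏ i, Real.exp (-lam i) := by
    rw [← Real.exp_sum]
    congr 1
    rw [hT, ← Finset.sum_neg_distrib]
  have hone : ∀ i : Fin q, (1:ℝ) ≤ μ := by
    intro i
    have h1 : 1 ≤ q := i.pos
    have : (1:ℝ) ≤ (q:ℝ) := by exact_mod_cast h1
    linarith
  have hupper : ∏ i, (1 - μ⁻¹ * lam i) ^ μ ≤ Real.exp (-T) := by
    rw [hexpT]
    apply Finset.prod_le_prod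
    · intro i _
      exact Real.rpow_nonneg (hfacnn i) μ
    · intro i _
      exact scalar_up hμ0 (hfac0 i)
  have hlower : Real.exp (-T) * (1 - μ⁻¹ * S) ≤ ∏ i, (1 - μ⁻¹ * lam i) ^ μ := by
    have hPnn : 0 ≤ ∏ i, (1 - μ⁻¹ * lam i) ^ μ :=
      Finset.prod_nonneg fun i _ => Real.rpow_nonneg (hfacnn i) μ
    by_cases hcase : μ⁻¹ * S ≤ 1
    · have haS : μ⁻¹ * S = ∑ i, μ⁻¹ * lam i ^ 2 := by rw [hS, Finset.mul_sum]
      have ha0 : ∀ i, 0 ≤ μ⁻¹ * lam i ^ 2 := fun i => by positivity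
      have ha1 : ∀ i, μ⁻¹ * lam i ^ 2 ≤ 1 := by
        intro i
        have := Finset.single_le_sum (f := fun i => μ⁻¹ * lam i ^ 2)
          (fun i _ => ha0 i) (Finset.mem_univ i)
        rw [← haS] at this
        linarith
      calc Real.exp (-T) * (1 - μ⁻¹ * S)
          ≤ Real.exp (-T) * ∏ i, (1 - μ⁻¹ * lam i ^ 2) := by
            apply mul_le_mul_of_nonneg_left _ (Real.exp_pos _).le
            rw [haS]
            exact weier _ ha0 ha1
        _ = ∏ i, Real.exp (-lam i) * (1 - μ⁻¹ * lam i ^ 2) := by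
            rw [hexpT, ← Finset.prod_mul_distrib]
        _ ≤ ∏ i, (1 - μ⁻¹ * lam i) ^ μ := by
            apply Finset.prod_le_prod
            · intro i _
              exact mul_nonneg (Real.exp_pos _).le (by linarith [ha1 i])
            · intro i _
              exact scalar_low (hone i) (hlam0 i) (hfac0 i)
    · have : 1 - μ⁻¹ * S ≤ 0 := by linarith
      have := mul_nonpos_of_nonneg_of_nonpos (Real.exp_pos (-T)).le this
      linarith
  have htr2 : (A * A).trace = S := htrA2
  rw [htr1, hrpow, htr2]
  constructor
  · linarith
  · nlinarith [hlower, Real.exp_pos (-T)]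
end

section
/- Fix $\mu \ge 3$ and define for $r,s \ge 0$ the Kingman–Bessel convolution of point measures on $[0,\infty)$ by $(\delta_r *_\mu \delta_s)(f) = \frac{1}{\kappa_\mu}\int_{-1}^1 f(\sqrt{r^2 + s^2 + 2rsv})(1-v^2)^{\mu - 3/2}\,dv$ with $\kappa_\mu = \int_{-1}^1 (1-v^2)^{\mu-3/2} dv$. Then there is a constant $C>0$, independent of $\mu, r, s$, such that for every function $f : [0,\infty) \to \mathbb{C}$ satisfying $|f(\sqrt{x}) - f(\sqrt{y})| \le L|x - y|$ for all $x,y \ge 0$, one has $|(\delta_r *_\mu \delta_s)(f) - f(\sqrt{r^2+s^2})| \le C L\, r s/\sqrt{\mu}$. -/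
open MeasureTheory Filter

/-- The Kingman–Bessel convolution normalization constant `κ_μ`. -/
noncomputable def kappa (μ : ℝ) : ℝ := ∫ v in Set.Icc (-1 : ℝ) 1, (1 - v ^ 2) ^ (μ - 3 / 2)

private lemma w_cont {α : ℝ} (hα : 0 ≤ α) : Continuous (fun v : ℝ => (1 - v ^ 2) ^ α) := by
  rw [continuous_iff_continuousAt]
  intro v
  exact ContinuousAt.rpow_const (by fun_prop) (Or.inr hα)

private lemma kappa_lb {μ : ℝ} (hμ : 3 ≤ μ) : (Real.sqrt (2 * μ))⁻¹ ≤ kappa μ := by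
  have hμ0 : (0 : ℝ) < μ := by linarith
  have hα1 : (1 : ℝ) ≤ μ - 3 / 2 := by linarith
  have hsq1 : (1 : ℝ) ≤ Real.sqrt (2 * μ) := by
    rw [show (1 : ℝ) = Real.sqrt 1 by simp]
    exact Real.sqrt_le_sqrt (by linarith)
  set b := (Real.sqrt (2 * μ))⁻¹ with hbdef
  have hb0 : 0 < b := inv_pos.mpr (by linarith)
  have hb1 : b ≤ 1 := inv_le_one_of_one_le₀ hsq1
  have hb2 : b ^ 2 = (2 * μ)⁻¹ := by
    rw [hbdef, ← Real.sqrt_inv, Real.sq_sqrt (by positivity)]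
  have hwint : IntegrableOn (fun v : ℝ => (1 - v ^ 2) ^ (μ - 3 / 2)) (Set.Icc (-1 : ℝ) 1) :=
    (w_cont (by linarith)).integrableOn_Icc
  have step1 : ∫ v in Set.Icc (-b) b, (1 - v ^ 2) ^ (μ - 3 / 2) ≤ kappa μ := by
    apply MeasureTheory.setIntegral_mono_set hwint
    · filter_upwards [ae_restrict_mem measurableSet_Icc] with v hv
      have h1 : v ^ 2 ≤ 1 := by nlinarith [hv.1, hv.2]
      exact Real.rpow_nonneg (by linarith) _
    · exact HasSubset.Subset.eventuallyLE (Set.Icc_subset_Icc (by linarith) hb1)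
  have step2 : ∫ v in Set.Icc (-b) b, (1 / 2 : ℝ) ≤
      ∫ v in Set.Icc (-b) b, (1 - v ^ 2) ^ (μ - 3 / 2) := by
    apply MeasureTheory.setIntegral_mono_on (integrableOn_const measure_Icc_lt_top.ne)
      ((w_cont (by linarith)).integrableOn_Icc) measurableSet_Icc
    intro v hv
    have hv2 : v ^ 2 ≤ b ^ 2 := by nlinarith [hv.1, hv.2]
    have hv1 : v ^ 2 ≤ 1 := le_trans hv2 (by nlinarith)
    have hbern : 1 + (μ - 3 / 2) * (-(v ^ 2)) ≤ (1 + -(v ^ 2)) ^ (μ - 3 / 2) :=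
      one_add_mul_self_le_rpow_one_add (by linarith : (-1:ℝ) ≤ -(v ^ 2)) hα1
    have harg : (μ - 3 / 2) * v ^ 2 ≤ 1 / 2 := by
      have : (μ - 3 / 2) * v ^ 2 ≤ μ * (2 * μ)⁻¹ := by
        rw [← hb2]
        apply mul_le_mul (by linarith) hv2 (by positivity) (by linarith)
      rw [mul_inv, ← mul_assoc, mul_comm μ, mul_assoc, mul_inv_cancel₀ (ne_of_gt hμ0)] at this
      linarith
    calc (1 / 2 : ℝ) ≤ 1 + (μ - 3 / 2) * (-(v ^ 2)) := by linarith
      _ ≤ (1 + -(v ^ 2)) ^ (μ - 3 / 2) := hbern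
      _ = (1 - v ^ 2) ^ (μ - 3 / 2) := by rw [show (1:ℝ) + -(v ^ 2) = 1 - v ^ 2 by ring]
  have step3 : ∫ v in Set.Icc (-b) b, (1 / 2 : ℝ) = b := by
    rw [MeasureTheory.setIntegral_const, Real.volume_real_Icc_of_le (by linarith)]
    simp only [smul_eq_mul]
    ring
  linarith [step1, step2, step3.ge]

private lemma I1_eq {α : ℝ} (hα : 1 ≤ α) :
    ∫ v in Set.Icc (-1 : ℝ) 1, |v| * (1 - v ^ 2) ^ α = (α + 1)⁻¹ := by
  have hp0 : (0 : ℝ) < α + 1 := by linarith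
  have hcont : Continuous (fun v : ℝ => |v| * (1 - v ^ 2) ^ α) :=
    continuous_abs.mul (w_cont (by linarith))
  have hF : ∀ v : ℝ, HasDerivAt (fun v : ℝ => (1 - v ^ 2) ^ (α + 1) * (-(2 * (α + 1))⁻¹))
      (v * (1 - v ^ 2) ^ α) v := by
    intro v
    have h1 : HasDerivAt (fun v : ℝ => 1 - v ^ 2) (-(2 * v)) v := by
      simpa using (hasDerivAt_pow 2 v).const_sub 1
    have h2 : HasDerivAt (fun x : ℝ => x ^ (α + 1))
        ((α + 1) * (1 - v ^ 2) ^ (α + 1 - 1)) (1 - v ^ 2) :=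
      Real.hasDerivAt_rpow_const (Or.inr (by linarith))
    have h3 := (h2.comp v h1).mul_const (-(2 * (α + 1))⁻¹)
    refine h3.congr_deriv ?_
    rw [show α + 1 - 1 = α by ring]
    field_simp
  have hint : ∀ a b : ℝ, IntervalIntegrable (fun v : ℝ => |v| * (1 - v ^ 2) ^ α) volume a b :=
    fun a b => hcont.intervalIntegrable a b
  have hpos : ∫ v in (0 : ℝ)..1, |v| * (1 - v ^ 2) ^ α = (2 * (α + 1))⁻¹ := by
    rw [intervalIntegral.integral_congr (g := fun v : ℝ => v * (1 - v ^ 2) ^ α)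
      (fun v hv => by
        rw [Set.uIcc_of_le (by norm_num : (0:ℝ) ≤ 1)] at hv
        simp [abs_of_nonneg hv.1])]
    have hc1 : Continuous (fun v : ℝ => v * (1 - v ^ 2) ^ α) :=
      continuous_id.mul (w_cont (by linarith))
    rw [intervalIntegral.integral_eq_sub_of_hasDerivAt (fun v _ => hF v)
      (hc1.intervalIntegrable 0 1)]
    rw [show ((1:ℝ) - 1 ^ 2) = 0 by norm_num, show ((1:ℝ) - 0 ^ 2) = 1 by norm_num,
      Real.zero_rpow (ne_of_gt hp0), Real.one_rpow]
    ring
  have hneg : ∫ v in (-1 : ℝ)..0, |v| * (1 - v ^ 2) ^ α = (2 * (α + 1))⁻¹ := by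
    rw [intervalIntegral.integral_congr (g := fun v : ℝ => -v * (1 - v ^ 2) ^ α)
      (fun v hv => by
        rw [Set.uIcc_of_le (by norm_num : (-1:ℝ) ≤ 0)] at hv
        simp [abs_of_nonpos hv.2])]
    have hc2 : Continuous (fun v : ℝ => -v * (1 - v ^ 2) ^ α) :=
      continuous_neg.mul (w_cont (by linarith))
    rw [intervalIntegral.integral_eq_sub_of_hasDerivAt
      (f := fun v : ℝ => -((1 - v ^ 2) ^ (α + 1) * (-(2 * (α + 1))⁻¹)))
      (fun v _ => by rw [neg_mul]; exact (hF v).neg)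
      (hc2.intervalIntegrable (-1) 0)]
    rw [show ((1:ℝ) - 0 ^ 2) = 1 by norm_num, show ((1:ℝ) - (-1) ^ 2) = 0 by norm_num,
      Real.zero_rpow (ne_of_gt hp0), Real.one_rpow]
    ring
  have hsplit := intervalIntegral.integral_add_adjacent_intervals
    (hint (-1) 0) (hint 0 1)
  rw [MeasureTheory.integral_Icc_eq_integral_Ioc,
    ← intervalIntegral.integral_of_le (by norm_num : (-1:ℝ) ≤ 1), ← hsplit, hpos, hneg,
    ← two_mul, mul_inv, ← mul_assoc, mul_inv_cancel₀ (by norm_num : (2:ℝ) ≠ 0), one_mul]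

private lemma main_est {μ : ℝ} (hμ : 3 ≤ μ) {r s : ℝ} (hr : 0 ≤ r) (hs : 0 ≤ s)
    (g : ℝ → ℂ) (L : ℝ) (hL0 : 0 ≤ L) (hgcont : Continuous g)
    (hg : ∀ x y : ℝ, 0 ≤ x → 0 ≤ y → ‖g x - g y‖ ≤ L * |x - y|) :
    ‖(kappa μ)⁻¹ • (∫ v in Set.Icc (-1 : ℝ) 1,
          ((1 - v ^ 2) ^ (μ - 3 / 2) : ℝ) • g (r ^ 2 + s ^ 2 + 2 * r * s * v))
        - g (r ^ 2 + s ^ 2)‖ ≤ 4 * L * r * s / Real.sqrt μ := by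
  have hμ0 : (0 : ℝ) < μ := by linarith
  have hα0 : (0 : ℝ) ≤ μ - 3 / 2 := by linarith
  have hsq2μ : (0 : ℝ) < Real.sqrt (2 * μ) := Real.sqrt_pos.mpr (by linarith)
  have hκ : (Real.sqrt (2 * μ))⁻¹ ≤ kappa μ := kappa_lb hμ
  have hκ0 : 0 < kappa μ := lt_of_lt_of_le (inv_pos.mpr hsq2μ) hκ
  have hκinv : (kappa μ)⁻¹ ≤ Real.sqrt (2 * μ) := by
    calc (kappa μ)⁻¹ ≤ ((Real.sqrt (2 * μ))⁻¹)⁻¹ :=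
          inv_anti₀ (inv_pos.mpr hsq2μ) hκ
      _ = Real.sqrt (2 * μ) := inv_inv _
  -- integrability
  have hwcont : Continuous (fun v : ℝ => (1 - v ^ 2) ^ (μ - 3 / 2)) := w_cont hα0
  have hInt1 : IntegrableOn
      (fun v : ℝ => ((1 - v ^ 2) ^ (μ - 3 / 2) : ℝ) • g (r ^ 2 + s ^ 2 + 2 * r * s * v))
      (Set.Icc (-1 : ℝ) 1) :=
    (hwcont.smul (hgcont.comp (by fun_prop))).integrableOn_Icc
  have hInt2 : IntegrableOn
      (fun v : ℝ => ((1 - v ^ 2) ^ (μ - 3 / 2) : ℝ) • g (r ^ 2 + s ^ 2))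
      (Set.Icc (-1 : ℝ) 1) :=
    (hwcont.smul continuous_const).integrableOn_Icc
  -- rewrite the difference as a single integral
  have key : (kappa μ)⁻¹ • (∫ v in Set.Icc (-1 : ℝ) 1,
        ((1 - v ^ 2) ^ (μ - 3 / 2) : ℝ) • g (r ^ 2 + s ^ 2 + 2 * r * s * v))
      - g (r ^ 2 + s ^ 2)
      = (kappa μ)⁻¹ • ∫ v in Set.Icc (-1 : ℝ) 1,
        ((1 - v ^ 2) ^ (μ - 3 / 2) : ℝ) •
          (g (r ^ 2 + s ^ 2 + 2 * r * s * v) - g (r ^ 2 + s ^ 2)) := by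
    have : ∫ v in Set.Icc (-1 : ℝ) 1,
        ((1 - v ^ 2) ^ (μ - 3 / 2) : ℝ) •
          (g (r ^ 2 + s ^ 2 + 2 * r * s * v) - g (r ^ 2 + s ^ 2))
        = (∫ v in Set.Icc (-1 : ℝ) 1,
            ((1 - v ^ 2) ^ (μ - 3 / 2) : ℝ) • g (r ^ 2 + s ^ 2 + 2 * r * s * v))
          - (kappa μ) • g (r ^ 2 + s ^ 2) := by
      simp_rw [smul_sub]
      rw [MeasureTheory.integral_sub hInt1 hInt2, integral_smul_const]
      rfl
    rw [this, smul_sub, smul_smul, inv_mul_cancel₀ (ne_of_gt hκ0), one_smul]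
  rw [key]
  -- bound the integral
  have hbnd : ‖∫ v in Set.Icc (-1 : ℝ) 1,
      ((1 - v ^ 2) ^ (μ - 3 / 2) : ℝ) •
        (g (r ^ 2 + s ^ 2 + 2 * r * s * v) - g (r ^ 2 + s ^ 2))‖
      ≤ ∫ v in Set.Icc (-1 : ℝ) 1,
        (2 * L * r * s) * (|v| * (1 - v ^ 2) ^ (μ - 3 / 2)) := by
    apply MeasureTheory.norm_integral_le_of_norm_le
    · exact ((continuous_const.mul (continuous_abs.mul hwcont)).integrableOn_Icc)
    · filter_upwards [ae_restrict_mem measurableSet_Icc] with v hv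
      have hv2 : v ^ 2 ≤ 1 := by nlinarith [hv.1, hv.2]
      have hw0 : (0 : ℝ) ≤ (1 - v ^ 2) ^ (μ - 3 / 2) := Real.rpow_nonneg (by linarith) _
      have harg : 0 ≤ r ^ 2 + s ^ 2 + 2 * r * s * v := by nlinarith [hv.1, hv.2, sq_nonneg (r - s), sq_nonneg (r + s)]
      have hdiff : ‖g (r ^ 2 + s ^ 2 + 2 * r * s * v) - g (r ^ 2 + s ^ 2)‖
          ≤ L * (2 * r * s * |v|) := by
        have := hg (r ^ 2 + s ^ 2 + 2 * r * s * v) (r ^ 2 + s ^ 2) harg (by positivity)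
        have habs : |r ^ 2 + s ^ 2 + 2 * r * s * v - (r ^ 2 + s ^ 2)| = 2 * r * s * |v| := by
          rw [show r ^ 2 + s ^ 2 + 2 * r * s * v - (r ^ 2 + s ^ 2) = 2 * r * s * v by ring,
            abs_mul, abs_of_nonneg (by positivity : (0:ℝ) ≤ 2 * r * s)]
        rwa [habs] at this
      rw [norm_smul, Real.norm_eq_abs, abs_of_nonneg hw0]
      calc (1 - v ^ 2) ^ (μ - 3 / 2) * ‖g (r ^ 2 + s ^ 2 + 2 * r * s * v) - g (r ^ 2 + s ^ 2)‖
          ≤ (1 - v ^ 2) ^ (μ - 3 / 2) * (L * (2 * r * s * |v|)) :=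
            mul_le_mul_of_nonneg_left hdiff hw0
        _ = (2 * L * r * s) * (|v| * (1 - v ^ 2) ^ (μ - 3 / 2)) := by ring
  have hI1 : ∫ v in Set.Icc (-1 : ℝ) 1,
      (2 * L * r * s) * (|v| * (1 - v ^ 2) ^ (μ - 3 / 2))
      = (2 * L * r * s) * (μ - 3 / 2 + 1)⁻¹ := by
    rw [MeasureTheory.integral_const_mul, I1_eq (by linarith)]
  -- final arithmetic
  have hq : Real.sqrt μ > 0 := Real.sqrt_pos.mpr hμ0
  have hq2 : Real.sqrt μ ^ 2 = μ := Real.sq_sqrt hμ0.le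
  have hsqrt2 : Real.sqrt 2 ≤ 3 / 2 := by
    rw [show (3 : ℝ) / 2 = Real.sqrt ((3 / 2) ^ 2) by rw [Real.sqrt_sq]; norm_num]
    exact Real.sqrt_le_sqrt (by norm_num)
  have hsplit : Real.sqrt (2 * μ) = Real.sqrt 2 * Real.sqrt μ := Real.sqrt_mul (by norm_num) μ
  calc ‖(kappa μ)⁻¹ • ∫ v in Set.Icc (-1 : ℝ) 1,
        ((1 - v ^ 2) ^ (μ - 3 / 2) : ℝ) •
          (g (r ^ 2 + s ^ 2 + 2 * r * s * v) - g (r ^ 2 + s ^ 2))‖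
      = (kappa μ)⁻¹ * ‖∫ v in Set.Icc (-1 : ℝ) 1,
        ((1 - v ^ 2) ^ (μ - 3 / 2) : ℝ) •
          (g (r ^ 2 + s ^ 2 + 2 * r * s * v) - g (r ^ 2 + s ^ 2))‖ := by
        rw [norm_smul, Real.norm_eq_abs, abs_of_pos (inv_pos.mpr hκ0)]
    _ ≤ Real.sqrt (2 * μ) * ((2 * L * r * s) * (μ - 3 / 2 + 1)⁻¹) := by
        apply mul_le_mul hκinv (by rw [← hI1]; exact hbnd) (norm_nonneg _) hsq2μ.le
    _ ≤ 4 * L * r * s / Real.sqrt μ := by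
        have hp0 : (0 : ℝ) < μ - 3 / 2 + 1 := by linarith
        have hK0 : (0:ℝ) ≤ L * r * s := by positivity
        have hqq : Real.sqrt μ * Real.sqrt μ = μ := Real.mul_self_sqrt hμ0.le
        rw [hsplit, show Real.sqrt 2 * Real.sqrt μ * (2 * L * r * s * (μ - 3 / 2 + 1)⁻¹)
          = Real.sqrt 2 * Real.sqrt μ * (2 * L * r * s) / (μ - 3 / 2 + 1) by ring,
          div_le_div_iff₀ hp0 hq]
        nlinarith [hqq, hsqrt2, hK0, Real.sqrt_nonneg (2:ℝ), hq.le,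
          mul_nonneg hK0 (by linarith : (0:ℝ) ≤ μ),
          mul_nonneg hK0 (by linarith : (0:ℝ) ≤ μ - 2),
          mul_nonneg (mul_nonneg hK0 (by linarith : (0:ℝ) ≤ μ)) (by linarith [hsqrt2] : (0:ℝ) ≤ 3/2 - Real.sqrt 2)]
  done

/-- Quantitative comparison of `(δ_r *_μ δ_s)(f)` with `f(√(r²+s²))` for
root-Lipschitz functions `f`: the error is at most `C L r s / √μ`. -/
theorem point_convolution_estimate :
    ∃ C > (0 : ℝ), ∀ μ : ℝ, μ ≥ 3 → ∀ r s : ℝ, 0 ≤ r → 0 ≤ s →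
      ∀ (f : ℝ → ℂ) (L : ℝ),
        (∀ x y : ℝ, 0 ≤ x → 0 ≤ y →
          ‖f (Real.sqrt x) - f (Real.sqrt y)‖ ≤ L * |x - y|) →
        ‖(kappa μ)⁻¹ • (∫ v in Set.Icc (-1 : ℝ) 1,
              ((1 - v ^ 2) ^ (μ - 3 / 2) : ℝ) • f (Real.sqrt (r ^ 2 + s ^ 2 + 2 * r * s * v)))
            - f (Real.sqrt (r ^ 2 + s ^ 2))‖
          ≤ C * L * r * s / Real.sqrt μ := by
  refine ⟨4, by norm_num, ?_⟩
  intro μ hμ r s hr hs f L h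
  have hL0 : 0 ≤ L := by
    have h01 := h 0 1 le_rfl zero_le_one
    rw [show |(0:ℝ) - 1| = 1 by norm_num, mul_one] at h01
    exact le_trans (norm_nonneg _) h01
  -- `g x = f (√x)` is continuous (Lipschitz on all of ℝ)
  have hsqrtmax : ∀ x : ℝ, Real.sqrt x = Real.sqrt (max x 0) := by
    intro x
    rcases le_total x 0 with hx | hx
    · rw [Real.sqrt_eq_zero'.mpr hx, max_eq_right hx, Real.sqrt_zero]
    · rw [max_eq_left hx]
  have glip : LipschitzWith (Real.toNNReal L) (fun x => f (Real.sqrt x)) := by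
    apply LipschitzWith.of_dist_le_mul
    intro x y
    rw [dist_eq_norm, Real.coe_toNNReal L hL0, Real.dist_eq]
    calc ‖f (Real.sqrt x) - f (Real.sqrt y)‖
        = ‖f (Real.sqrt (max x 0)) - f (Real.sqrt (max y 0))‖ := by
          rw [hsqrtmax x, hsqrtmax y]
      _ ≤ L * |max x 0 - max y 0| :=
          h (max x 0) (max y 0) (le_max_right _ _) (le_max_right _ _)
      _ ≤ L * |x - y| :=
          mul_le_mul_of_nonneg_left (abs_max_sub_max_le_abs x y 0) hL0
  exact main_est hμ hr hs (fun x => f (Real.sqrt x)) L hL0 glip.continuous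
    (fun x y hx hy => h x y hx hy)
end
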